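/- Let $d \geq 3$ be odd, $K$ a number field with ring of integers $\mathcal{O}_K$, $s,t \in \mathcal{O}_K$ with $2(d-2)s$ and $dt$ relatively prime, $x_0 = s/t$, $b = x_0^2$, $f(x) = x^d - bx^{d-2}$, and $\eta$ with $\eta^2 = (d-2)x_0^2/d$. Then for every $n \geq 1$, the element $F_n := s^{-2}(dt^2)^{d^n}(f^n(\eta)^2 - x_0^2)$ lies in $\mathcal{O}_K$ and is relatively prime to $2d(d-2)st$. -/

import Mathlib

open NumberField

lemma stmt16_notUnit_natCast (K : Type*) [Field K] [NumberField K] (m : ℕ) (hm : 2 ≤ m) :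
    ¬ IsUnit ((m : ℕ) : RingOfIntegers K) := by
  intro h
  rw [NumberField.isUnit_iff_norm] at h
  have h1 : ((RingOfIntegers.norm ℚ ((m : ℕ) : RingOfIntegers K)) : ℚ)
      = Algebra.norm ℚ (((m : ℕ) : RingOfIntegers K) : K) := RingOfIntegers.coe_norm ℚ _
  have h2 : (((m : ℕ) : RingOfIntegers K) : K) = algebraMap ℚ K (m : ℚ) := by
    push_cast; simp
  rw [h2, Algebra.norm_algebraMap] at h1
  rw [h1] at h
  have hr : 0 < Module.finrank ℚ K := Module.finrank_pos
  have hlt : (1:ℚ) < (m:ℚ) ^ Module.finrank ℚ K := by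
    apply one_lt_pow₀
    · exact_mod_cast by omega
    · omega
  rw [abs_of_pos (by positivity : (0:ℚ) < (m:ℚ) ^ Module.finrank ℚ K)] at h
  rw [h] at hlt
  exact lt_irrefl _ hlt

lemma stmt16_isCoprime_sub_of_dvd {R : Type*} [CommRing R] {a b c : R}
    (h : IsCoprime a c) (hdvd : c ∣ b) : IsCoprime (a - b) c := by
  obtain ⟨q, rfl⟩ := hdvd
  have := h.add_mul_left_left (-q)
  simpa [mul_neg, ← sub_eq_add_neg] using this

def stmt16Aux (d : ℕ) {O : Type*} [CommRing O] (s t : O) : ℕ → O × ℕ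
  | 0 => (1, d)
  | k+1 =>
    ((stmt16Aux d s t k).1 ^ (d-2) *
      (4^((d-2)^k) * ((d:O)-2)^((d-2)^(k+1)) * s^(2*(stmt16Aux d s t k).2-2)
          * (stmt16Aux d s t k).1^2
        - (d:O)^(d^(k+1)) * t^(2*d^(k+1)-2)),
     (d-2)*(stmt16Aux d s t k).2 + 2)

def stmt16F (d : ℕ) {O : Type*} [CommRing O] (s t : O) (k : ℕ) : O :=
  4^((d-2)^k) * ((d:O)-2)^((d-2)^(k+1)) * s^(2*(stmt16Aux d s t k).2-2)
      * (stmt16Aux d s t k).1^2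
    - (d:O)^(d^(k+1)) * t^(2*d^(k+1)-2)

lemma stmt16_base_field {F : Type*} [Field F] (m : ℕ) (sK tK D : F)
    (ht : tK ≠ 0) (hD : D ≠ 0) :
    4 * (D-2)^m * sK^(2*(m+2)) =
      (D*tK^2)^(m+2) * (((D-2)*(sK/tK)^2/D)^m * ((D-2)*(sK/tK)^2/D - (sK/tK)^2)^2) := by
  have h1 : (D-2)*(sK/tK)^2/D - (sK/tK)^2 = -(2*(sK/tK)^2)/D := by
    field_simp; ring
  rw [h1]
  field_simp
  ring_nf
  rw [show D*sK^2*D⁻¹*tK⁻¹^2 - sK^2*D⁻¹*tK⁻¹^2*2 = (-2+D)*sK^2*D⁻¹*tK⁻¹^2 by ring]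
  simp only [mul_pow, inv_pow]
  field_simp
  ring

lemma stmt16_step_ring {O : Type*} [CommRing O] (z s M F : O) (q e r : ℕ) :
    (4:O)^(q*r) * z^((q*r)*r) * s^(2*(r*e+2)) * (M^r*F)^2
      = ((4:O)^q * z^(q*r) * s^(2*e) * M^2)^r * (s^2*F)^2 := by
  rw [pow_mul (4:O) q r, pow_mul z (q*r) r,
    show 2*(r*e+2) = (2*e)*r+4 from by ring, pow_add, pow_mul s (2*e) r,
    mul_pow (M^r) F, ← pow_mul M, Nat.mul_comm r 2, pow_mul M]
  ring

/-- For odd `d ≥ 3`, `x₀ = s/t`, `b = x₀²`, `f(x) = x^d - bx^{d-2}`, and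
`η² = (d-2)x₀²/d`, the element `F_n = s^{-2}(dt²)^{d^n}(f^n(η)² - x₀²)` is an algebraic
integer relatively prime to `2d(d-2)st`, for every `n ≥ 1`. -/
theorem stmt16 (K : Type*) [Field K] [NumberField K] (d : ℕ) (hd : 3 ≤ d) (hodd : Odd d)
    (s t : RingOfIntegers K)
    (hcop : IsCoprime (2 * ((d : RingOfIntegers K) - 2) * s) ((d : RingOfIntegers K) * t))
    (η : K)
    (hη : η ^ 2 = ((d : K) - 2) *
      (algebraMap (RingOfIntegers K) K s / algebraMap (RingOfIntegers K) K t) ^ 2 / (d : K))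
    (n : ℕ) (hn : 1 ≤ n) :
    ∃ F : RingOfIntegers K,
      IsCoprime F (2 * (d : RingOfIntegers K) * ((d : RingOfIntegers K) - 2) * s * t) ∧
      (let sK : K := algebraMap (RingOfIntegers K) K s
       let tK : K := algebraMap (RingOfIntegers K) K t
       let x₀ : K := sK / tK
       let b : K := x₀ ^ 2
       let f : K → K := fun x => x ^ d - b * x ^ (d - 2)
       algebraMap (RingOfIntegers K) K F =
         (sK ^ 2)⁻¹ * ((d : K) * tK ^ 2) ^ (d ^ n) * ((f^[n] η) ^ 2 - x₀ ^ 2)) := by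
  obtain ⟨k, rfl⟩ : ∃ k, n = k + 1 := ⟨n-1, by omega⟩
  have hd2 : 2 ≤ d := by omega
  have h2u : ¬ IsUnit (2 : RingOfIntegers K) := by
    have := stmt16_notUnit_natCast K 2 le_rfl
    simpa using this
  have hdu : ¬ IsUnit ((d : ℕ) : RingOfIntegers K) := stmt16_notUnit_natCast K d (by omega)
  have ht0 : t ≠ 0 := by
    rintro rfl
    rw [mul_zero] at hcop
    exact h2u (isUnit_of_mul_isUnit_left (isUnit_of_mul_isUnit_left
      (isCoprime_zero_right.mp hcop)))
  have hs0 : s ≠ 0 := by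
    rintro rfl
    rw [mul_zero] at hcop
    exact hdu (isUnit_of_mul_isUnit_left (isCoprime_zero_left.mp hcop))
  set sK : K := algebraMap (RingOfIntegers K) K s with hsKdef
  set tK : K := algebraMap (RingOfIntegers K) K t with htKdef
  have hsK : sK ≠ 0 := RingOfIntegers.coe_ne_zero_iff.mpr hs0
  have htK : tK ≠ 0 := RingOfIntegers.coe_ne_zero_iff.mpr ht0
  have hdK : (d : K) ≠ 0 := Nat.cast_ne_zero.mpr (by omega)
  -- equations for the auxiliary sequence
  have hM0 : (stmt16Aux d s t 0).1 = (1 : RingOfIntegers K) := rfl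
  have he0 : (stmt16Aux d s t 0).2 = d := rfl
  have hMs : ∀ k, (stmt16Aux d s t (k+1)).1 = (stmt16Aux d s t k).1 ^ (d-2) * stmt16F d s t k :=
    fun _ => rfl
  have hes : ∀ k, (stmt16Aux d s t (k+1)).2 = (d-2)*(stmt16Aux d s t k).2 + 2 := fun _ => rfl
  have he2 : ∀ k, 2 ≤ (stmt16Aux d s t k).2 := by
    intro k
    induction k with
    | zero => rw [he0]; omega
    | succ k ih => rw [hes k]; omega
  have hdk1 : ∀ k, 3 ≤ d^(k+1) := fun k =>
    le_trans hd (Nat.le_self_pow (Nat.succ_ne_zero k) d)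
  have hpk : ∀ k : ℕ, (d-2)^k ≠ 0 := fun k => pow_ne_zero k (by omega)
  -- coprimality atoms
  have c2dt : IsCoprime (2 : RingOfIntegers K) ((d : RingOfIntegers K)*t) :=
    hcop.of_mul_left_left.of_mul_left_left
  have czdt : IsCoprime ((d : RingOfIntegers K)-2) ((d : RingOfIntegers K)*t) :=
    hcop.of_mul_left_left.of_mul_left_right
  have csdt : IsCoprime s ((d : RingOfIntegers K)*t) := hcop.of_mul_left_right
  have cd : IsCoprime ((d : RingOfIntegers K)) (2*((d : RingOfIntegers K)-2)*s) :=
    hcop.symm.of_mul_left_left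
  have ct : IsCoprime t (2*((d : RingOfIntegers K)-2)*s) := hcop.symm.of_mul_left_right
  have c4dt : IsCoprime (4 : RingOfIntegers K) ((d : RingOfIntegers K)*t) := by
    have h4 : (4 : RingOfIntegers K) = 2^2 := by norm_num
    rw [h4]; exact c2dt.pow_left
  -- coprimality of F_k with d*t (given coprimality of M_k)
  have hFdt : ∀ k, IsCoprime ((stmt16Aux d s t k).1) ((d : RingOfIntegers K)*t) →
      IsCoprime (stmt16F d s t k) ((d : RingOfIntegers K)*t) := by
    intro k hc
    apply stmt16_isCoprime_sub_of_dvd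
    · exact (((c4dt.pow_left).mul_left (czdt.pow_left)).mul_left (csdt.pow_left)).mul_left
        (hc.pow_left)
    · exact mul_dvd_mul (dvd_pow_self _ (by have := hdk1 k; omega))
        (dvd_pow_self _ (by have := hdk1 k; omega))
  have hMco : ∀ k, IsCoprime ((stmt16Aux d s t k).1) ((d : RingOfIntegers K)*t) := by
    intro k
    induction k with
    | zero => rw [hM0]; exact isCoprime_one_left
    | succ k ih =>
      rw [hMs k]
      exact (ih.pow_left).mul_left (hFdt k ih)
  have hF2s : ∀ k, IsCoprime (stmt16F d s t k) (2*((d : RingOfIntegers K)-2)*s) := by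
    intro k
    have hB : IsCoprime ((d : RingOfIntegers K)^(d^(k+1)) * t^(2*d^(k+1)-2))
        (2*((d : RingOfIntegers K)-2)*s) := (cd.pow_left).mul_left (ct.pow_left)
    have hdvd : (2*((d : RingOfIntegers K)-2)*s) ∣
        4^((d-2)^k) * ((d : RingOfIntegers K)-2)^((d-2)^(k+1)) *
          s^(2*(stmt16Aux d s t k).2-2) * (stmt16Aux d s t k).1^2 := by
      apply dvd_mul_of_dvd_left
      exact mul_dvd_mul (mul_dvd_mul (dvd_pow ⟨2, by norm_num⟩ (hpk k))
        (dvd_pow_self _ (hpk (k+1)))) (dvd_pow_self _ (by have := he2 k; omega))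
    have h := stmt16_isCoprime_sub_of_dvd hB hdvd
    have h2 := h.neg_left
    rw [neg_sub] at h2
    exact h2
  -- helper: f applied pointwise
  have hf : ∀ x : K, x^d - (sK/tK)^2 * x^(d-2) = x^(d-2) * (x^2 - (sK/tK)^2) := by
    intro x
    rw [show x^d = x^(d-2)*x^2 from by rw [← pow_add, Nat.sub_add_cancel hd2]]
    ring
  -- main key identity
  have key : ∀ k, algebraMap (RingOfIntegers K) K
      (4^((d-2)^k) * ((d : RingOfIntegers K)-2)^((d-2)^(k+1)) *
        s^(2*(stmt16Aux d s t k).2) * (stmt16Aux d s t k).1^2)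
      = ((d:K) * tK^2)^(d^(k+1)) *
        (((fun x : K => x ^ d - (sK/tK)^2 * x ^ (d - 2))^[k+1]) η)^2 := by
    have bridge : ∀ k, (algebraMap (RingOfIntegers K) K
        (4^((d-2)^k) * ((d : RingOfIntegers K)-2)^((d-2)^(k+1)) *
          s^(2*(stmt16Aux d s t k).2) * (stmt16Aux d s t k).1^2)
        = ((d:K) * tK^2)^(d^(k+1)) *
          (((fun x : K => x ^ d - (sK/tK)^2 * x ^ (d - 2))^[k+1]) η)^2) →
        ((d:K) * tK^2)^(d^(k+1)) *
          ((((fun x : K => x ^ d - (sK/tK)^2 * x ^ (d - 2))^[k+1]) η)^2 - (sK/tK)^2)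
          = algebraMap (RingOfIntegers K) K (s^2 * stmt16F d s t k) := by
      intro k hk
      have hx : ((d:K)*tK^2)^(d^(k+1)) * (sK/tK)^2
          = algebraMap (RingOfIntegers K) K
            ((d : RingOfIntegers K)^(d^(k+1)) * s^2 * t^(2*d^(k+1)-2)) := by
        simp only [map_mul, map_pow, map_natCast, ← hsKdef, ← htKdef]
        rw [mul_pow, ← pow_mul tK, div_pow]
        rw [show 2*d^(k+1) = (2*d^(k+1)-2)+2 from by have := hdk1 k; omega, pow_add]
        simp only [Nat.add_sub_cancel]
        field_simp
        ring
      have hsF : s^2 * stmt16F d s t k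
          = 4^((d-2)^k) * ((d : RingOfIntegers K)-2)^((d-2)^(k+1)) *
              s^(2*(stmt16Aux d s t k).2) * (stmt16Aux d s t k).1^2
            - (d : RingOfIntegers K)^(d^(k+1)) * s^2 * t^(2*d^(k+1)-2) := by
        rw [stmt16F,
          show 2*(stmt16Aux d s t k).2 = 2 + (2*(stmt16Aux d s t k).2 - 2)
            from by have := he2 k; omega, pow_add]
        simp only [Nat.add_sub_cancel_left]
        ring
      rw [mul_sub, ← hk, hx, hsF, map_sub]
    intro k
    induction k with
    | zero =>
      simp only [zero_add, pow_zero, pow_one, hM0, he0, Function.iterate_one, one_pow, mul_one]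
      rw [map_mul, map_mul, map_pow, map_pow, map_sub, map_natCast, map_ofNat,
        map_ofNat, ← hsKdef]
      rw [hf η]
      rw [mul_pow (η^(d-2)) (η^2 - (sK/tK)^2), ← pow_mul η, Nat.mul_comm (d-2) 2, pow_mul η, hη]
      have hb := stmt16_base_field (d-2) sK tK (d:K) htK hdK
      rw [Nat.sub_add_cancel hd2] at hb
      exact hb
    | succ k ih =>
      have hb := bridge k ih
      rw [pow_succ ((d:ℕ)-2) (k+1), pow_succ ((d:ℕ)-2) k, hMs k, hes k]
      rw [stmt16_step_ring ((d : RingOfIntegers K)-2) s ((stmt16Aux d s t k).1)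
        (stmt16F d s t k) ((d-2)^k) ((stmt16Aux d s t k).2) (d-2)]
      rw [map_mul, map_pow, map_pow, ← pow_succ ((d:ℕ)-2) k, ih, ← hb]
      rw [Function.iterate_succ_apply' (fun x : K => x ^ d - (sK/tK)^2 * x ^ (d - 2)) (k+1) η]
      rw [hf]
      rw [show d^(k+1+1) = (d^(k+1))*(d-2) + (d^(k+1))*2
        from by rw [← Nat.mul_add, Nat.sub_add_cancel hd2, ← pow_succ]]
      rw [pow_add ((d:K)*tK^2) (d^(k+1)*(d-2)) (d^(k+1)*2), pow_mul ((d:K)*tK^2) (d^(k+1)) (d-2), pow_mul ((d:K)*tK^2) (d^(k+1)) 2]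
      rw [mul_pow (((fun x : K => x ^ d - (sK/tK)^2 * x ^ (d - 2))^[k+1]) η ^ (d-2)),
        ← pow_mul (((fun x : K => x ^ d - (sK/tK)^2 * x ^ (d - 2))^[k+1]) η) (d-2) 2,
        Nat.mul_comm (d-2) 2,
        pow_mul (((fun x : K => x ^ d - (sK/tK)^2 * x ^ (d - 2))^[k+1]) η) 2 (d-2)]
      ring
    -- done key
  -- assemble the answer
  refine ⟨stmt16F d s t k, ?_, ?_⟩
  · have h := (hF2s k).mul_right (hFdt k (hMco k))
    rwa [show 2*((d : RingOfIntegers K)-2)*s*((d : RingOfIntegers K)*t)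
      = 2*(d : RingOfIntegers K)*((d : RingOfIntegers K)-2)*s*t from by ring] at h
  · show algebraMap (RingOfIntegers K) K (stmt16F d s t k)
      = (sK^2)⁻¹ * ((d:K)*tK^2)^(d^(k+1)) *
        ((((fun x : K => x ^ d - (sK/tK)^2 * x ^ (d - 2))^[k+1]) η)^2 - (sK/tK)^2)
    have bridge : ((d:K) * tK^2)^(d^(k+1)) *
        ((((fun x : K => x ^ d - (sK/tK)^2 * x ^ (d - 2))^[k+1]) η)^2 - (sK/tK)^2)
        = algebraMap (RingOfIntegers K) K (s^2 * stmt16F d s t k) := by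
      have hk := key k
      have hx : ((d:K)*tK^2)^(d^(k+1)) * (sK/tK)^2
          = algebraMap (RingOfIntegers K) K
            ((d : RingOfIntegers K)^(d^(k+1)) * s^2 * t^(2*d^(k+1)-2)) := by
        simp only [map_mul, map_pow, map_natCast, ← hsKdef, ← htKdef]
        rw [mul_pow, ← pow_mul tK, div_pow]
        rw [show 2*d^(k+1) = (2*d^(k+1)-2)+2 from by have := hdk1 k; omega, pow_add]
        simp only [Nat.add_sub_cancel]
        field_simp
        ring
      have hsF : s^2 * stmt16F d s t k
          = 4^((d-2)^k) * ((d : RingOfIntegers K)-2)^((d-2)^(k+1)) *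
              s^(2*(stmt16Aux d s t k).2) * (stmt16Aux d s t k).1^2
            - (d : RingOfIntegers K)^(d^(k+1)) * s^2 * t^(2*d^(k+1)-2) := by
        rw [stmt16F,
          show 2*(stmt16Aux d s t k).2 = 2 + (2*(stmt16Aux d s t k).2 - 2)
            from by have := he2 k; omega, pow_add]
        simp only [Nat.add_sub_cancel_left]
        ring
      rw [mul_sub, ← hk, hx, hsF, map_sub]
    rw [mul_assoc, bridge, map_mul, map_pow, ← hsKdef]
    rw [inv_mul_cancel_left₀ (pow_ne_zero 2 hsK)]
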